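/- arXiv:2003.14000 — 3 statements merged into one kernel-verified Lean document; each statement's English description precedes it below -/
import Mathlib

section
/- Let H > 0, let I = (a,b) be a bounded open interval, let v ∈ C¹([a,b]) with min_{[a,b]} v > -H, and let M ≥ max{1, sup_{I}(H+v), sup_{I}|v'|}. Let P be continuously differentiable on the closure of O_I(v) with P(x,-H) = 0 for all x ∈ I and P(a,z) = 0 for all z ∈ (-H, v(a)). Then ‖P‖²_{L²(O_I(v))} ≤ 2M ‖∇P‖_{L¹(O_I(v))} ‖∂_z P‖_{L¹(O_I(v))}. -/
open MeasureTheory Set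
open scoped ENNReal NNReal

/-- The region between the bottom plate at height `-H` and the graph of `v` over
the interval `I = (a,b)`. -/
def OIv (H a b : ℝ) (v : ℝ → ℝ) : Set (ℝ × ℝ) :=
  {p : ℝ × ℝ | p.1 ∈ Set.Ioo a b ∧ -H < p.2 ∧ p.2 < v p.1}

section Helpers

lemma meas_indicator {α β : Type*} [TopologicalSpace α] [MeasurableSpace α] [OpensMeasurableSpace α]
    [TopologicalSpace β] [MeasurableSpace β] [BorelSpace β] [Zero β]
    {s : Set α} (hs : IsOpen s) {f : α → β} (hf : ContinuousOn f s) :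
    Measurable (s.indicator f) := by
  have h1 : Measurable (fun x : s => f x) :=
    (continuousOn_iff_continuous_restrict.1 hf).measurable
  have h2 : MeasurableEmbedding ((↑) : s → α) :=
    MeasurableEmbedding.subtype_coe hs.measurableSet
  have heq : s.indicator f = Function.extend ((↑) : s → α) (fun x : s => f x) (fun _ => 0) := by
    funext x
    by_cases hx : x ∈ s
    · rw [Set.indicator_of_mem hx]
      have hex : ∃ y : s, (y : α) = x := ⟨⟨x, hx⟩, rfl⟩
      classical
      rw [Function.extend_def, dif_pos hex]
      exact (congrArg f hex.choose_spec).symm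
    · classical
      rw [Set.indicator_of_notMem hx, Function.extend_def, dif_neg]
      rintro ⟨y, rfl⟩; exact hx y.2
  rw [heq]
  exact h2.measurable_extend h1 measurable_const


lemma map_le_smul_volume {M : ℝ} (hM : 0 < M) {T : Set ℝ} (hT : MeasurableSet T)
    {φ : ℝ → ℝ} (hφ : Measurable φ)
    (hexp : ∀ z ∈ T, ∀ z' ∈ T, |z - z'| ≤ M * |φ z - φ z'|) :
    Measure.map φ (volume.restrict T) ≤ (ENNReal.ofReal M) • volume := by
  refine Measure.le_iff.2 fun A hA => ?_
  rw [Measure.map_apply hφ hA, Measure.restrict_apply (hφ hA), Measure.smul_apply, smul_eq_mul]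
  set S := φ ⁻¹' A ∩ T with hS
  have hinj : Set.InjOn φ S := by
    intro z hz z' hz' h
    have h2 := hexp z hz.2 z' hz'.2
    rw [h, sub_self, abs_zero, mul_zero, abs_nonpos_iff, sub_eq_zero] at h2
    exact h2
  set g := Function.invFunOn φ S with hg
  have hg1 : ∀ z ∈ S, g (φ z) = z := fun z hz => hinj.leftInvOn_invFunOn hz
  have hlip : LipschitzOnWith M.toNNReal g (φ '' S) := by
    rw [lipschitzOnWith_iff_dist_le_mul]
    rintro y ⟨z, hz, rfl⟩ y' ⟨z', hz', rfl⟩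
    rw [hg1 z hz, hg1 z' hz', Real.dist_eq, Real.dist_eq, Real.coe_toNNReal M hM.le]
    exact hexp z hz.2 z' hz'.2
  have hSsub : S ⊆ g '' (φ '' S) := fun z hz => ⟨φ z, Set.mem_image_of_mem _ hz, hg1 z hz⟩
  have himg : φ '' S ⊆ A := by
    rintro y ⟨z, hz, rfl⟩; exact hz.1
  calc volume S ≤ volume (g '' (φ '' S)) := measure_mono hSsub
    _ = μH[1] (g '' (φ '' S)) := by rw [MeasureTheory.hausdorffMeasure_real]
    _ ≤ (M.toNNReal : ℝ≥0∞) ^ (1:ℝ) * μH[1] (φ '' S) :=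
        hlip.hausdorffMeasure_image_le zero_le_one
    _ = ENNReal.ofReal M * volume (φ '' S) := by
        rw [MeasureTheory.hausdorffMeasure_real, ENNReal.rpow_one, ENNReal.ofReal]
    _ ≤ ENNReal.ofReal M * volume A := by
        exact mul_le_mul_right (measure_mono himg) _

lemma lintegral_comp_le {M : ℝ} (hM : 0 < M) {T : Set ℝ} (hT : MeasurableSet T)
    {φ : ℝ → ℝ} (hφ : Measurable φ)
    (hexp : ∀ z ∈ T, ∀ z' ∈ T, |z - z'| ≤ M * |φ z - φ z'|)
    {B : ℝ → ℝ≥0∞} (hB : Measurable B) :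
    ∫⁻ z in T, B (φ z) ≤ ENNReal.ofReal M * ∫⁻ s, B s := by
  have h1 : ∫⁻ z in T, B (φ z) = ∫⁻ y, B y ∂(Measure.map φ (volume.restrict T)) :=
    (lintegral_map hB hφ).symm
  rw [h1]
  calc ∫⁻ y, B y ∂(Measure.map φ (volume.restrict T))
      ≤ ∫⁻ y, B y ∂((ENNReal.ofReal M) • volume) :=
        lintegral_mono' (map_le_smul_volume hM hT hφ hexp) le_rfl
    _ = ENNReal.ofReal M * ∫⁻ s, B s := lintegral_smul_measure _ _

lemma oiv_isOpen {H a b : ℝ} {v : ℝ → ℝ} (hv : ContinuousOn v (Icc a b)) :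
    IsOpen (OIv H a b v) := by
  have h : OIv H a b v =
      (Ioo a b ×ˢ (univ : Set ℝ)) ∩
        (fun p : ℝ × ℝ => (p.2, v p.1 - p.2)) ⁻¹' (Ioi (-H) ×ˢ Ioi 0) := by
    ext p
    simp only [OIv, mem_setOf_eq, mem_inter_iff, mem_prod, mem_preimage, mem_Ioi, mem_Ioo,
      mem_univ, and_true, sub_pos]
    try tauto
  rw [h]
  have hc : ContinuousOn (fun p : ℝ × ℝ => (p.2, v p.1 - p.2)) (Ioo a b ×ˢ (univ : Set ℝ)) := by
    apply ContinuousOn.prodMk (continuous_snd.continuousOn)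
    apply ContinuousOn.sub _ (continuous_snd.continuousOn)
    exact hv.comp continuous_fst.continuousOn
      (fun p hp => Ioo_subset_Icc_self (mem_prod.1 hp).1)
  exact hc.isOpen_inter_preimage (isOpen_Ioo.prod isOpen_univ) ((isOpen_Ioi).prod isOpen_Ioi)

lemma oiv_closure_subset {H a b : ℝ} {v : ℝ → ℝ} (hv : ContinuousOn v (Icc a b)) :
    closure (OIv H a b v) ⊆ {p : ℝ × ℝ | p.1 ∈ Icc a b ∧ -H ≤ p.2 ∧ p.2 ≤ v p.1} := by
  apply closure_minimal
  · intro p hp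
    exact ⟨Ioo_subset_Icc_self hp.1, hp.2.1.le, hp.2.2.le⟩
  · have h : {p : ℝ × ℝ | p.1 ∈ Icc a b ∧ -H ≤ p.2 ∧ p.2 ≤ v p.1} =
        (Icc a b ×ˢ Ici (-H)) ∩
          ((Icc a b ×ˢ (univ : Set ℝ)) ∩ (fun p : ℝ × ℝ => v p.1 - p.2) ⁻¹' (Ici 0)) := by
      ext p
      simp only [mem_setOf_eq, mem_inter_iff, mem_prod, mem_preimage, mem_Ici, mem_univ, and_true,
        sub_nonneg]
      try tauto
    rw [h]
    apply IsClosed.inter ((isClosed_Icc).prod isClosed_Ici)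
    apply ContinuousOn.preimage_isClosed_of_isClosed
    · apply ContinuousOn.sub _ (continuous_snd.continuousOn)
      exact hv.comp continuous_fst.continuousOn (fun p hp => (mem_prod.1 hp).1)
    · exact (isClosed_Icc).prod isClosed_univ
    · exact isClosed_Ici

lemma oiv_col_closure {H a b : ℝ} {v : ℝ → ℝ} {x : ℝ} (hx : x ∈ Ioo a b) (hvx : -H < v x) :
    ({x} ×ˢ Icc (-H) (v x) : Set (ℝ × ℝ)) ⊆ closure (OIv H a b v) := by
  have h1 : ({x} ×ˢ Ioo (-H) (v x) : Set (ℝ × ℝ)) ⊆ OIv H a b v := by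
    rintro ⟨x', z⟩ ⟨hx', hz⟩
    simp only [mem_singleton_iff] at hx'
    subst hx'
    exact ⟨hx, hz.1, hz.2⟩
  have h2 : ({x} ×ˢ Icc (-H) (v x) : Set (ℝ × ℝ)) ⊆ closure ({x} ×ˢ Ioo (-H) (v x)) := by
    rw [closure_prod_eq, closure_Ioo hvx.ne, closure_singleton]
  exact h2.trans (closure_mono h1)

lemma oiv_row_closure {H a b : ℝ} {v : ℝ → ℝ} {x₁ x z : ℝ} (hx₁ : a ≤ x₁) (hx : x₁ < x)
    (hxb : x < b) (hz : -H < z) (hvz : ∀ s ∈ Ioc x₁ x, z < v s) :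
    (Icc x₁ x ×ˢ {z} : Set (ℝ × ℝ)) ⊆ closure (OIv H a b v) := by
  have h1 : (Ioc x₁ x ×ˢ {z} : Set (ℝ × ℝ)) ⊆ OIv H a b v := by
    rintro ⟨s, z'⟩ ⟨hs, hz'⟩
    simp only [mem_singleton_iff] at hz'
    subst hz'
    exact ⟨⟨lt_of_le_of_lt hx₁ hs.1, lt_of_le_of_lt hs.2 hxb⟩, hz, hvz s hs⟩
  have h2 : (Icc x₁ x ×ˢ {z} : Set (ℝ × ℝ)) ⊆ closure (Ioc x₁ x ×ˢ {z}) := by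
    rw [closure_prod_eq, closure_Ioc hx.ne, closure_singleton]
  exact h2.trans (closure_mono h1)


lemma fderiv_bound_on_open {P : ℝ × ℝ → ℝ} {D : Set (ℝ × ℝ)} (hD : IsOpen D)
    (hb : Bornology.IsBounded D) (hP : ContDiffOn ℝ 1 P (closure D)) :
    ∃ K : ℝ, 0 ≤ K ∧ ∀ p ∈ D, ‖fderiv ℝ P p‖ ≤ K := by
  have hcomp : IsCompact (closure D) := hb.isCompact_closure
  -- local bounds
  have hloc : ∀ p ∈ closure D, ∃ W : Set (ℝ × ℝ), IsOpen W ∧ p ∈ W ∧ ∃ C : ℝ, 0 ≤ C ∧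
      ∀ q ∈ W ∩ D, ‖fderiv ℝ P q‖ ≤ C := by
    intro p hp
    have h1 : ContDiffWithinAt ℝ (0 + 1) P (closure D) p := by
      norm_num
      exact hP p hp
    obtain ⟨u, hu, -, f', hf', hf'c⟩ :=
      (contDiffWithinAt_succ_iff_hasFDerivWithinAt (by simp)).1 h1
    rw [insert_eq_self.2 hp] at hu
    obtain ⟨V, hVopen, hpV, hVsub⟩ := mem_nhdsWithin.1 hu
    -- continuity of f' at p within u
    have hcont : ContinuousWithinAt f' u p := hf'c.continuousWithinAt
    have hev : ∀ᶠ y in nhdsWithin p u, ‖f' y‖ ≤ ‖f' p‖ + 1 := by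
      have h2 : Metric.closedBall (f' p) 1 ∈ nhds (f' p) :=
        Metric.closedBall_mem_nhds (f' p) one_pos
      filter_upwards [hcont h2] with y hy
      have h3 : ‖f' y‖ - ‖f' p‖ ≤ ‖f' y - f' p‖ := norm_sub_norm_le _ _
      have h4 : dist (f' y) (f' p) ≤ 1 := hy
      rw [dist_eq_norm] at h4
      linarith
    obtain ⟨V', hV'open, hpV', hV'sub⟩ := mem_nhdsWithin.1 hev
    refine ⟨V ∩ V', hVopen.inter hV'open, ⟨hpV, hpV'⟩, max (‖f' p‖ + 1) 0, le_max_right _ _, ?_⟩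
    intro q hq
    have hqu : q ∈ u := hVsub ⟨hq.1.1, subset_closure hq.2⟩
    have hunhds : u ∈ nhds q := by
      apply Filter.mem_of_superset ((hVopen.inter hD).mem_nhds ⟨hq.1.1, hq.2⟩)
      intro y hy
      exact hVsub ⟨hy.1, subset_closure hy.2⟩
    have hfd : HasFDerivAt P (f' q) q := (hf' q hqu).hasFDerivAt hunhds
    rw [hfd.fderiv]
    have h5 : q ∈ {y | ‖f' y‖ ≤ ‖f' p‖ + 1} := hV'sub ⟨hq.1.2, hqu⟩
    exact le_max_of_le_left h5
  choose W hWopen hWmem C hC0 hCb using hloc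
  obtain ⟨t, ht⟩ := hcomp.elim_nhds_subcover' (fun p hp => W p hp)
    (fun p hp => (hWopen p hp).mem_nhds (hWmem p hp))
  set K : ℝ≥0 := t.sup (fun x => (C x x.2).toNNReal) with hK
  refine ⟨K, K.coe_nonneg, ?_⟩
  intro q hq
  have : q ∈ ⋃ x ∈ t, W x x.2 := ht (subset_closure hq)
  simp only [mem_iUnion] at this
  obtain ⟨x, hxt, hxW⟩ := this
  calc ‖fderiv ℝ P q‖ ≤ C x x.2 := hCb x x.2 q ⟨hxW, hq⟩
    _ = ((C x x.2).toNNReal : ℝ) := (Real.coe_toNNReal _ (hC0 x x.2)).symm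
    _ ≤ ((K : ℝ≥0) : ℝ) := NNReal.coe_le_coe.2 (Finset.le_sup (f := fun x : closure D => (C x x.2).toNNReal) hxt)

lemma oiv_left_col {H a b : ℝ} {v : ℝ → ℝ} (hab : a < b) (hvc : ContinuousOn v (Icc a b))
    (hva : -H < v a) : ∀ t ∈ Icc (-H) (v a), ((a : ℝ), t) ∈ closure (OIv H a b v) := by
  have hIoo : ∀ t ∈ Ioo (-H) (v a), ((a : ℝ), t) ∈ closure (OIv H a b v) := by
    intro t ht
    have hcw : ContinuousWithinAt v (Icc a b) a := hvc a (left_mem_Icc.2 hab.le)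
    have hpre : v ⁻¹' (Ioi t) ∈ nhdsWithin a (Icc a b) := hcw (Ioi_mem_nhds ht.2)
    obtain ⟨V, hVopen, haV, hVsub⟩ := mem_nhdsWithin.1 hpre
    obtain ⟨ε, hε, hball⟩ := Metric.isOpen_iff.1 hVopen a haV
    set c := min (a + ε) b with hcdef
    have hac : a < c := lt_min (by linarith) hab
    have hsub : Ioo a c ×ˢ ({t} : Set ℝ) ⊆ OIv H a b v := by
      rintro ⟨s, t'⟩ ⟨hs, ht'⟩
      simp only [mem_singleton_iff] at ht'
      have hsb : s < b := lt_of_lt_of_le hs.2 (min_le_right _ _)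
      have hsV : s ∈ V := by
        apply hball
        rw [Metric.mem_ball, Real.dist_eq, abs_of_pos (sub_pos.2 hs.1)]
        have h5 : s < a + ε := lt_of_lt_of_le hs.2 (min_le_left _ _)
        linarith
      have hvs : t < v s := hVsub ⟨hsV, hs.1.le, hsb.le⟩
      refine ⟨⟨hs.1, hsb⟩, ?_, ?_⟩
      · rw [ht']; exact ht.1
      · rw [ht']; exact hvs
    have hcl : ((a : ℝ), t) ∈ closure (Ioo a c ×ˢ ({t} : Set ℝ)) := by
      rw [closure_prod_eq, closure_Ioo hac.ne, closure_singleton]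
      exact ⟨left_mem_Icc.2 hac.le, rfl⟩
    exact (closure_mono hsub) hcl
  intro t ht
  have h2 : ({a} ×ˢ Icc (-H) (v a) : Set (ℝ × ℝ)) ⊆ closure ({a} ×ˢ Ioo (-H) (v a)) := by
    rw [closure_prod_eq, closure_Ioo hva.ne, closure_singleton]
  have h3 : closure ({a} ×ˢ Ioo (-H) (v a) : Set (ℝ × ℝ)) ⊆ closure (OIv H a b v) := by
    rw [← closure_closure (s := OIv H a b v)]
    apply closure_mono
    rintro ⟨a', t'⟩ ⟨ha', ht'⟩
    simp only [mem_singleton_iff] at ha'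
    subst ha'
    exact hIoo t' ht'
  exact h3 (h2 ⟨rfl, ht⟩)

end Helpers

/-- Poincaré-type inequality for functions `P ∈ H¹_{WS}(O_I(v))`, i.e. `C¹` functions
on the closure of `O_I(v)` vanishing on the bottom edge and on the left edge:
`‖P‖²_{L²} ≤ 2M ‖∇P‖_{L¹} ‖∂_z P‖_{L¹}` with `M ≥ max{1, sup(H+v), sup|v'|}`. -/
theorem stmt_7 (H a b M : ℝ) (hH : 0 < H) (hab : a < b) (v : ℝ → ℝ)
    (hv : ContDiffOn ℝ 1 v (Icc a b)) (hvH : ∀ x ∈ Icc a b, -H < v x)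
    (hM1 : 1 ≤ M) (hM2 : ∀ x ∈ Ioo a b, H + v x ≤ M)
    (hM3 : ∀ x ∈ Ioo a b, |deriv v x| ≤ M)
    (P : ℝ × ℝ → ℝ) (hP : ContDiffOn ℝ 1 P (closure (OIv H a b v)))
    (hbot : ∀ x ∈ Ioo a b, P (x, -H) = 0)
    (hleft : ∀ z ∈ Ioo (-H) (v a), P (a, z) = 0) :
    ∫ p in OIv H a b v, (P p) ^ 2 ≤
      2 * M
        * (∫ p in OIv H a b v,
            Real.sqrt ((deriv (fun t => P (t, p.2)) p.1) ^ 2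
              + (deriv (fun z => P (p.1, z)) p.2) ^ 2))
        * (∫ p in OIv H a b v, |deriv (fun z => P (p.1, z)) p.2|) := by
  classical
  set D := OIv H a b v with hDdef
  have hM0 : (0:ℝ) < M := lt_of_lt_of_le one_pos hM1
  have hvc : ContinuousOn v (Icc a b) := hv.continuousOn
  have hDopen : IsOpen D := oiv_isOpen hvc
  have hDmeas : MeasurableSet D := hDopen.measurableSet
  have hDclos : closure D ⊆ {p : ℝ × ℝ | p.1 ∈ Icc a b ∧ -H ≤ p.2 ∧ p.2 ≤ v p.1} :=
    oiv_closure_subset (H := H) hvc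
  obtain ⟨V0, hV0⟩ : ∃ V0, ∀ x ∈ Icc a b, v x ≤ V0 := by
    obtain ⟨x0, hx0, hmax⟩ := isCompact_Icc.exists_isMaxOn (nonempty_Icc.2 hab.le) hvc
    exact ⟨v x0, hmax⟩
  have hDsub : D ⊆ Ioo a b ×ˢ Ioo (-H) (V0 + 1) := by
    rintro ⟨x, z⟩ ⟨h1, h2, h3⟩
    have := hV0 x (Ioo_subset_Icc_self h1)
    exact ⟨h1, h2, by dsimp only at h3 ⊢; linarith⟩
  have hDbdd : Bornology.IsBounded D :=
    ((Metric.isBounded_Ioo a b).prod (Metric.isBounded_Ioo _ _)).subset hDsub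
  have hDvol : volume D < ⊤ := by
    refine lt_of_le_of_lt (measure_mono hDsub) ?_
    rw [Measure.volume_eq_prod, Measure.prod_prod, Real.volume_Ioo, Real.volume_Ioo]
    exact ENNReal.mul_lt_top ENNReal.ofReal_lt_top ENNReal.ofReal_lt_top
  -- differentiability on D
  have hPc : ContinuousOn P (closure D) := hP.continuousOn
  have hPdiff : ∀ p ∈ D, HasFDerivAt P (fderiv ℝ P p) p := by
    intro p hp
    have h1 : DifferentiableWithinAt ℝ P (closure D) p :=
      (hP.differentiableOn one_ne_zero) p (subset_closure hp)
    have h2 : closure D ∈ nhds p :=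
      Filter.mem_of_superset (hDopen.mem_nhds hp) subset_closure
    exact (h1.differentiableAt h2).hasFDerivAt
  set Gx : ℝ × ℝ → ℝ := fun p => fderiv ℝ P p (1, 0) with hGxdef
  set Gz : ℝ × ℝ → ℝ := fun p => fderiv ℝ P p (0, 1) with hGzdef
  have hfc : ContinuousOn (fderiv ℝ P) D :=
    (hP.mono subset_closure).continuousOn_fderiv_of_isOpen hDopen le_rfl
  have hGxc : ContinuousOn Gx D := hfc.clm_apply continuousOn_const
  have hGzc : ContinuousOn Gz D := hfc.clm_apply continuousOn_const
  have hGxm : Measurable Gx := measurable_fderiv_apply_const ℝ P (1, 0)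
  have hGzm : Measurable Gz := measurable_fderiv_apply_const ℝ P (0, 1)
  obtain ⟨K, hK0, hKb⟩ := fderiv_bound_on_open hDopen hDbdd hP
  have hnorm10 : ‖((1:ℝ), (0:ℝ))‖ = 1 := by
    simp [Prod.norm_def]
  have hnorm01 : ‖((0:ℝ), (1:ℝ))‖ = 1 := by
    simp [Prod.norm_def]
  have hGxK : ∀ p ∈ D, |Gx p| ≤ K := by
    intro p hp
    calc |Gx p| = ‖fderiv ℝ P p (1, 0)‖ := rfl
      _ ≤ ‖fderiv ℝ P p‖ * ‖((1:ℝ), (0:ℝ))‖ := (fderiv ℝ P p).le_opNorm _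
      _ = ‖fderiv ℝ P p‖ := by rw [hnorm10, mul_one]
      _ ≤ K := hKb p hp
  have hGzK : ∀ p ∈ D, |Gz p| ≤ K := by
    intro p hp
    calc |Gz p| = ‖fderiv ℝ P p (0, 1)‖ := rfl
      _ ≤ ‖fderiv ℝ P p‖ * ‖((0:ℝ), (1:ℝ))‖ := (fderiv ℝ P p).le_opNorm _
      _ = ‖fderiv ℝ P p‖ := by rw [hnorm01, mul_one]
      _ ≤ K := hKb p hp
  -- partial derivatives
  have hderZ : ∀ p ∈ D, HasDerivAt (fun t => P (p.1, t)) (Gz p) p.2 := by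
    intro p hp
    have h1 : HasDerivAt (fun t : ℝ => ((p.1 : ℝ), t)) ((0 : ℝ), (1 : ℝ)) p.2 :=
      (hasDerivAt_const p.2 p.1).prodMk (hasDerivAt_id p.2)
    have h2 := (hPdiff p hp).comp_hasDerivAt p.2 h1
    exact h2
  have hderX : ∀ p ∈ D, HasDerivAt (fun t => P (t, p.2)) (Gx p) p.1 := by
    intro p hp
    have h1 : HasDerivAt (fun t : ℝ => (t, (p.2 : ℝ))) ((1 : ℝ), (0 : ℝ)) p.1 :=
      (hasDerivAt_id p.1).prodMk (hasDerivAt_const p.1 p.2)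
    have h2 := (hPdiff p hp).comp_hasDerivAt p.1 h1
    exact h2
  have hw_eq : ∀ p ∈ D, deriv (fun z => P (p.1, z)) p.2 = Gz p :=
    fun p hp => (hderZ p hp).deriv
  have hx_eq : ∀ p ∈ D, deriv (fun t => P (t, p.2)) p.1 = Gx p :=
    fun p hp => (hderX p hp).deriv
  -- the ENNReal-valued integrands
  set F : ℝ × ℝ → ℝ≥0∞ := D.indicator (fun p => ENNReal.ofReal |Gz p|) with hFdef
  set G : ℝ × ℝ → ℝ≥0∞ := D.indicator (fun p => ENNReal.ofReal |Gx p|) with hGdef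
  set Q : ℝ × ℝ → ℝ≥0∞ := D.indicator (fun p => ENNReal.ofReal ((P p) ^ 2)) with hQdef
  have hFm : Measurable F :=
    meas_indicator hDopen (ENNReal.continuous_ofReal.comp_continuousOn (hGzc.abs))
  have hGm : Measurable G :=
    meas_indicator hDopen (ENNReal.continuous_ofReal.comp_continuousOn (hGxc.abs))
  have hQm : Measurable Q := by
    apply meas_indicator hDopen
    exact ENNReal.continuous_ofReal.comp_continuousOn ((hPc.mono subset_closure).pow 2)
  set Bq : ℝ → ℝ≥0∞ := fun s => ∫⁻ t, F (s, t) with hBqdef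
  set Aq : ℝ → ℝ≥0∞ := fun t => ∫⁻ s, G (s, t) with hAqdef
  have hFmem : ∀ p ∈ D, F p = ENNReal.ofReal |Gz p| := by
    intro p hp; simp only [hFdef]; exact Set.indicator_of_mem hp _
  have hGmem : ∀ p ∈ D, G p = ENNReal.ofReal |Gx p| := by
    intro p hp; simp only [hGdef]; exact Set.indicator_of_mem hp _
  have hQmem : ∀ p ∈ D, Q p = ENNReal.ofReal ((P p) ^ 2) := by
    intro p hp; simp only [hQdef]; exact Set.indicator_of_mem hp _
  have hFnot : ∀ p, p ∉ D → F p = 0 := by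
    intro p hp; simp only [hFdef]; exact Set.indicator_of_notMem hp _
  have hGnot : ∀ p, p ∉ D → G p = 0 := by
    intro p hp; simp only [hGdef]; exact Set.indicator_of_notMem hp _
  have hQnot : ∀ p, p ∉ D → Q p = 0 := by
    intro p hp; simp only [hQdef]; exact Set.indicator_of_notMem hp _
  have hBqm : Measurable Bq := hFm.lintegral_prod_right'
  have hAqm : Measurable Aq := hGm.lintegral_prod_left'
  have hBqa : Bq a = 0 := by
    rw [hBqdef]
    have h0 : ∀ t : ℝ, F (a, t) = 0 := by
      intro t
      simp only [hFdef]
      apply Set.indicator_of_notMem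
      rintro ⟨h1, -⟩
      exact (lt_irrefl a) h1.1
    simp only [h0, lintegral_zero]
  -- vertical FTC bound
  have KL1 : ∀ x ∈ Ioo a b, ∀ z ∈ Ioc (-H) (v x),
      ENNReal.ofReal |P (x, z)| ≤ Bq x := by
    intro x hx z hz
    have hvx : -H < v x := hvH x (Ioo_subset_Icc_self hx)
    have hcol : ∀ t ∈ Icc (-H) (v x), ((x : ℝ), t) ∈ closure D := by
      intro t ht
      exact oiv_col_closure hx hvx ⟨rfl, ht⟩
    have hcont : ContinuousOn (fun t => P (x, t)) (Icc (-H) z) := by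
      apply hPc.comp (Continuous.continuousOn (by fun_prop))
      intro t ht
      exact hcol t ⟨ht.1, le_trans ht.2 hz.2⟩
    have hder : ∀ t ∈ Ioo (-H) z, HasDerivAt (fun t => P (x, t)) (Gz (x, t)) t := by
      intro t ht
      exact hderZ (x, t) ⟨hx, ht.1, lt_of_lt_of_le ht.2 hz.2⟩
    have hae : ∀ᵐ t ∂(volume.restrict (Ioc (-H) z)), ‖Gz (x, t)‖ ≤ K := by
      have h1 : ∀ᵐ t : ℝ ∂volume, t ≠ z := by
        rw [ae_iff]
        have : {t : ℝ | ¬ t ≠ z} = {z} := by ext t; simp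
        rw [this]
        exact Real.volume_singleton
      filter_upwards [ae_restrict_of_ae h1, ae_restrict_mem measurableSet_Ioc] with t h1 h2
      have htIoo : t ∈ Ioo (-H) z := ⟨h2.1, lt_of_le_of_ne h2.2 h1⟩
      have : ((x : ℝ), t) ∈ D := ⟨hx, htIoo.1, lt_of_lt_of_le htIoo.2 hz.2⟩
      simpa [Real.norm_eq_abs] using hGzK _ this
    have hint : IntervalIntegrable (fun t => Gz (x, t)) volume (-H) z := by
      rw [intervalIntegrable_iff_integrableOn_Ioc_of_le hz.1.le]
      refine ⟨(hGzm.comp (by fun_prop)).aestronglyMeasurable, ?_⟩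
      exact (hasFiniteIntegral_const K).mono' hae
    have heq : ∫ t in (-H)..z, Gz (x, t) = P (x, z) - P (x, -H) :=
      intervalIntegral.integral_eq_sub_of_hasDeriv_right_of_le hz.1.le hcont
        (fun t ht => (hder t ht).hasDerivWithinAt) hint
    rw [hbot x hx, sub_zero] at heq
    have habs : |P (x, z)| ≤ ∫ t in Ioc (-H) z, |Gz (x, t)| := by
      rw [← heq]
      calc |∫ t in (-H)..z, Gz (x, t)| ≤ ∫ t in (-H)..z, |Gz (x, t)| :=
            intervalIntegral.abs_integral_le_integral_abs hz.1.le
        _ = ∫ t in Ioc (-H) z, |Gz (x, t)| := intervalIntegral.integral_of_le hz.1.le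
    calc ENNReal.ofReal |P (x, z)| ≤ ENNReal.ofReal (∫ t in Ioc (-H) z, |Gz (x, t)|) :=
          ENNReal.ofReal_le_ofReal habs
      _ = ENNReal.ofReal (∫ t in Ioo (-H) z, |Gz (x, t)|) := by
          rw [integral_Ioc_eq_integral_Ioo]
      _ = ∫⁻ t in Ioo (-H) z, ENNReal.ofReal |Gz (x, t)| := by
          apply ofReal_integral_eq_lintegral_ofReal
          · have h2 := ((intervalIntegrable_iff_integrableOn_Ioc_of_le hz.1.le).1 hint).abs
            exact MeasureTheory.IntegrableOn.mono_set h2 Ioo_subset_Ioc_self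
          · filter_upwards with t using abs_nonneg _
      _ ≤ ∫⁻ t, F (x, t) := by
          rw [← lintegral_indicator measurableSet_Ioo]
          apply lintegral_mono
          intro t
          by_cases ht : t ∈ Ioo (-H) z
          · rw [Set.indicator_of_mem ht]
            have hmem : ((x : ℝ), t) ∈ D := ⟨hx, ht.1, lt_of_lt_of_le ht.2 hz.2⟩
            exact le_of_eq (hFmem _ hmem).symm
          · rw [Set.indicator_of_notMem ht]
            exact zero_le
  -- P vanishes on the closed left edge
  have hva : -H < v a := hvH a (left_mem_Icc.2 hab.le)
  have hPa0 : ∀ t ∈ Ioc (-H) (v a), P ((a : ℝ), t) = 0 := by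
    intro t ht
    rcases eq_or_lt_of_le ht.2 with heq | hlt
    · have hmemcl : ((a : ℝ), v a) ∈ closure D :=
        oiv_left_col hab hvc hva (v a) (right_mem_Icc.2 hva.le)
      have hcw : ContinuousWithinAt (fun s : ℝ => P (a, s)) (Ioo (-H) (v a)) (v a) := by
        have h2 : ContinuousWithinAt P (closure D) ((a : ℝ), v a) := hPc _ hmemcl
        have h3 : ContinuousWithinAt (fun s : ℝ => ((a : ℝ), s)) (Ioo (-H) (v a)) (v a) :=
          Continuous.continuousWithinAt (by fun_prop)
        exact h2.comp h3 (fun s hs => oiv_left_col hab hvc hva s (Ioo_subset_Icc_self hs))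
      haveI hne : (nhdsWithin (v a) (Ioo (-H) (v a))).NeBot := by
        apply mem_closure_iff_nhdsWithin_neBot.1
        rw [closure_Ioo hva.ne]
        exact right_mem_Icc.2 hva.le
      have h4 : Filter.Tendsto (fun s : ℝ => P (a, s)) (nhdsWithin (v a) (Ioo (-H) (v a)))
          (nhds 0) := by
        refine Filter.Tendsto.congr' ?_ tendsto_const_nhds
        filter_upwards [self_mem_nhdsWithin] with s hs
        exact (hleft s hs).symm
      rw [heq]
      exact tendsto_nhds_unique hcw h4
    · exact hleft t ⟨ht.1, hlt⟩
  -- the sliding left endpoint ξ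
  set ξ : ℝ → ℝ → ℝ := fun x z => sSup ({s ∈ Icc a x | v s ≤ z} ∪ {a}) with hξdef
  have hξbdd : ∀ x z, BddAbove ({s ∈ Icc a x | v s ≤ z} ∪ {a}) := by
    intro x z
    refine ⟨max a x, ?_⟩
    rintro s (⟨hs1, -⟩ | hs)
    · exact le_max_of_le_right hs1.2
    · simp only [mem_singleton_iff] at hs
      exact le_max_of_le_left hs.le
  have hξne : ∀ x z, ({s ∈ Icc a x | v s ≤ z} ∪ {a}).Nonempty := fun x z => ⟨a, Or.inr rfl⟩
  have hξge : ∀ x z, a ≤ ξ x z := fun x z => le_csSup (hξbdd x z) (Or.inr rfl)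
  have hξle : ∀ x z, a ≤ x → ξ x z ≤ x := by
    intro x z hax
    apply csSup_le (hξne x z)
    rintro s (⟨hs1, -⟩ | hs)
    · exact hs1.2
    · simp only [mem_singleton_iff] at hs
      exact le_of_eq_of_le hs hax
  have hξmono : ∀ x, Monotone (ξ x) := by
    intro x z z' hzz
    apply csSup_le_csSup (hξbdd x z') (hξne x z)
    rintro s (⟨hs1, hs2⟩ | hs)
    · exact Or.inl ⟨hs1, le_trans hs2 hzz⟩
    · exact Or.inr hs
  have hξmem : ∀ x ∈ Ioo a b, ∀ z : ℝ, ξ x z ∈ ({s ∈ Icc a x | v s ≤ z} ∪ {a}) := by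
    intro x hx z
    apply IsClosed.csSup_mem _ (hξne x z) (hξbdd x z)
    apply IsClosed.union _ isClosed_singleton
    have h1 : {s ∈ Icc a x | v s ≤ z} = Icc a x ∩ v ⁻¹' (Iic z) := by
      ext s; simp [mem_setOf_eq, and_comm]; try tauto
    rw [h1]
    exact ContinuousOn.preimage_isClosed_of_isClosed
      (hvc.mono (Icc_subset_Icc le_rfl hx.2.le)) isClosed_Icc isClosed_Iic
  have hξgt : ∀ x ∈ Ioo a b, ∀ z : ℝ, ∀ s ∈ Ioc (ξ x z) x, ¬ (v s ≤ z) := by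
    intro x hx z s hs hvs
    have h1 : s ∈ ({s ∈ Icc a x | v s ≤ z} ∪ {a}) :=
      Or.inl ⟨⟨le_trans (hξge x z) hs.1.le, hs.2⟩, hvs⟩
    exact absurd (le_csSup (hξbdd x z) h1) (not_le.2 hs.1)
  have hξlt : ∀ x ∈ Ioo a b, ∀ z : ℝ, z < v x → ξ x z < x := by
    intro x hx z hzv
    rcases lt_or_eq_of_le (hξle x z hx.1.le) with h | h
    · exact h
    · exfalso
      rcases hξmem x hx z with h1 | h1
      · rw [h] at h1
        exact absurd hzv (not_lt.2 h1.2)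
      · simp only [mem_singleton_iff] at h1
        rw [h1] at h
        exact hx.1.ne h
  have hξz : ∀ x ∈ Ioo a b, ∀ z ∈ Ioo (-H) (v x), a < ξ x z → v (ξ x z) = z := by
    intro x hx z hz hlt
    have h1b : ξ x z < x := hξlt x hx z hz.2
    have hvs : ∀ s ∈ Ioc (ξ x z) x, z < v s := fun s hs => not_le.1 (hξgt x hx z s hs)
    have hrow : Icc (ξ x z) x ×ˢ ({z} : Set ℝ) ⊆ closure D :=
      oiv_row_closure (hξge x z) h1b hx.2 hz.1 hvs
    have hcl : ((ξ x z : ℝ), z) ∈ closure D := hrow ⟨left_mem_Icc.2 h1b.le, rfl⟩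
    have hge : z ≤ v (ξ x z) := (hDclos hcl).2.2
    have hle' : v (ξ x z) ≤ z := by
      rcases hξmem x hx z with h1 | h1
      · exact h1.2
      · simp only [mem_singleton_iff] at h1
        rw [h1] at hlt
        exact absurd hlt (lt_irrefl a)
    exact le_antisymm hle' hge
  -- horizontal FTC bound
  have KL2 : ∀ x ∈ Ioo a b, ∀ z ∈ Ioo (-H) (v x),
      ENNReal.ofReal |P (x, z)| ≤ Bq (ξ x z) + Aq z := by
    intro x hx z hz
    have h1a : a ≤ ξ x z := hξge x z
    have h1b : ξ x z < x := hξlt x hx z hz.2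
    have hvs : ∀ s ∈ Ioc (ξ x z) x, z < v s := fun s hs => not_le.1 (hξgt x hx z s hs)
    have hrow : Icc (ξ x z) x ×ˢ ({z} : Set ℝ) ⊆ closure D :=
      oiv_row_closure h1a h1b hx.2 hz.1 hvs
    have hcont : ContinuousOn (fun s => P (s, z)) (Icc (ξ x z) x) := by
      apply hPc.comp (Continuous.continuousOn (by fun_prop))
      intro s hs
      exact hrow ⟨hs, rfl⟩
    have hDmemIoc : ∀ s ∈ Ioc (ξ x z) x, ((s : ℝ), z) ∈ D := fun s hs =>
      ⟨⟨lt_of_le_of_lt h1a hs.1, lt_of_le_of_lt hs.2 hx.2⟩, hz.1, hvs s hs⟩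
    have hder : ∀ s ∈ Ioo (ξ x z) x, HasDerivAt (fun s => P (s, z)) (Gx (s, z)) s :=
      fun s hs => hderX (s, z) (hDmemIoc s ⟨hs.1, hs.2.le⟩)
    have hint : IntervalIntegrable (fun s => Gx (s, z)) volume (ξ x z) x := by
      rw [intervalIntegrable_iff_integrableOn_Ioc_of_le h1b.le]
      refine ⟨(hGxm.comp (by fun_prop)).aestronglyMeasurable, ?_⟩
      apply (hasFiniteIntegral_const K).mono'
      filter_upwards [ae_restrict_mem measurableSet_Ioc] with s hs
      simpa [Real.norm_eq_abs] using hGxK _ (hDmemIoc s hs)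
    have heq : ∫ s in (ξ x z)..x, Gx (s, z) = P (x, z) - P (ξ x z, z) :=
      intervalIntegral.integral_eq_sub_of_hasDeriv_right_of_le h1b.le hcont
        (fun s hs => (hder s hs).hasDerivWithinAt) hint
    have htri : |P (x, z)| ≤ |P (ξ x z, z)| + ∫ s in Ioc (ξ x z) x, |Gx (s, z)| := by
      have h2 : P (x, z) = P (ξ x z, z) + ∫ s in (ξ x z)..x, Gx (s, z) := by
        rw [heq]; ring
      have h3 : |∫ s in (ξ x z)..x, Gx (s, z)| ≤ ∫ s in (ξ x z)..x, |Gx (s, z)| :=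
        intervalIntegral.abs_integral_le_integral_abs h1b.le
      have h4 : |∫ s in (ξ x z)..x, Gx (s, z)| ≤ ∫ s in Ioc (ξ x z) x, |Gx (s, z)| := by
        calc |∫ s in (ξ x z)..x, Gx (s, z)| ≤ ∫ s in (ξ x z)..x, |Gx (s, z)| := h3
          _ = ∫ s in Ioc (ξ x z) x, |Gx (s, z)| := intervalIntegral.integral_of_le h1b.le
      calc |P (x, z)| = |P (ξ x z, z) + ∫ s in (ξ x z)..x, Gx (s, z)| := by rw [← h2]
        _ ≤ |P (ξ x z, z)| + |∫ s in (ξ x z)..x, Gx (s, z)| := abs_add_le _ _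
        _ ≤ |P (ξ x z, z)| + ∫ s in Ioc (ξ x z) x, |Gx (s, z)| := by linarith
    have hPx₁ : ENNReal.ofReal |P (ξ x z, z)| ≤ Bq (ξ x z) := by
      rcases eq_or_lt_of_le h1a with heqa | hlt
      · have hcl : ((ξ x z : ℝ), z) ∈ closure D := hrow ⟨left_mem_Icc.2 h1b.le, rfl⟩
        have hza : z ≤ v (ξ x z) := (hDclos hcl).2.2
        rw [← heqa] at hza
        have h5 : P (ξ x z, z) = 0 := by
          rw [← heqa]
          exact hPa0 z ⟨hz.1, hza⟩
        rw [h5, abs_zero, ENNReal.ofReal_zero]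
        exact zero_le
      · have hx₁b : ξ x z ∈ Ioo a b := ⟨hlt, lt_trans h1b hx.2⟩
        have hveq : v (ξ x z) = z := hξz x hx z hz hlt
        have h6 := KL1 (ξ x z) hx₁b (v (ξ x z))
          ⟨hvH _ (Ioo_subset_Icc_self hx₁b), le_rfl⟩
        rwa [hveq] at h6
    have hAz : ENNReal.ofReal (∫ s in Ioc (ξ x z) x, |Gx (s, z)|) ≤ Aq z := by
      calc ENNReal.ofReal (∫ s in Ioc (ξ x z) x, |Gx (s, z)|)
          = ENNReal.ofReal (∫ s in Ioo (ξ x z) x, |Gx (s, z)|) := by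
            rw [integral_Ioc_eq_integral_Ioo]
        _ = ∫⁻ s in Ioo (ξ x z) x, ENNReal.ofReal |Gx (s, z)| := by
            apply ofReal_integral_eq_lintegral_ofReal
            · have h2 := ((intervalIntegrable_iff_integrableOn_Ioc_of_le h1b.le).1 hint).abs
              exact MeasureTheory.IntegrableOn.mono_set h2 Ioo_subset_Ioc_self
            · filter_upwards with s using abs_nonneg _
        _ ≤ ∫⁻ s, G (s, z) := by
            rw [← lintegral_indicator measurableSet_Ioo]
            apply lintegral_mono
            intro s
            by_cases hs : s ∈ Ioo (ξ x z) x
            · rw [Set.indicator_of_mem hs]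
              exact le_of_eq (hGmem _ (hDmemIoc s ⟨hs.1, hs.2.le⟩)).symm
            · rw [Set.indicator_of_notMem hs]
              exact zero_le
    calc ENNReal.ofReal |P (x, z)|
        ≤ ENNReal.ofReal (|P (ξ x z, z)| + ∫ s in Ioc (ξ x z) x, |Gx (s, z)|) :=
          ENNReal.ofReal_le_ofReal htri
      _ = ENNReal.ofReal |P (ξ x z, z)| + ENNReal.ofReal (∫ s in Ioc (ξ x z) x, |Gx (s, z)|) :=
          ENNReal.ofReal_add (abs_nonneg _) (setIntegral_nonneg measurableSet_Ioc
            (fun s _ => abs_nonneg _))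
      _ ≤ Bq (ξ x z) + Aq z := add_le_add hPx₁ hAz
  -- substitution bound
  have hSUB : ∀ x ∈ Ioo a b,
      ∫⁻ z in Ioo (-H) (v x), Bq (ξ x z) ≤ ENNReal.ofReal M * ∫⁻ s, Bq s := by
    intro x hx
    have hmono : Monotone (ξ x) := hξmono x
    have hφm : Measurable (ξ x) := hmono.measurable
    set T : Set ℝ := Ioo (-H) (v x) ∩ {z : ℝ | a < ξ x z} with hTdef
    have hTm : MeasurableSet T :=
      measurableSet_Ioo.inter (measurableSet_lt measurable_const hφm)
    have hTsub : T ⊆ Ioo (-H) (v x) := inter_subset_left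
    have hsplit : Ioo (-H) (v x) = T ∪ (Ioo (-H) (v x) \ T) := (union_diff_cancel hTsub).symm
    have hzero : ∫⁻ z in Ioo (-H) (v x) \ T, Bq (ξ x z) = 0 := by
      have h0 : ∀ z ∈ Ioo (-H) (v x) \ T, Bq (ξ x z) = (fun _ : ℝ => (0 : ℝ≥0∞)) z := by
        intro z hzmem
        have h1 : ¬ (a < ξ x z) := fun hc => hzmem.2 ⟨hzmem.1, hc⟩
        have h2 : ξ x z = a := le_antisymm (not_lt.1 h1) (hξge x z)
        rw [h2, hBqa]
      rw [setLIntegral_congr_fun (measurableSet_Ioo.diff hTm)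
        h0, lintegral_zero]
    have hexp : ∀ z ∈ T, ∀ z' ∈ T, |z - z'| ≤ M * |ξ x z - ξ x z'| := by
      have key : ∀ z ∈ T, ∀ z' ∈ T, z < z' → z' - z ≤ M * (ξ x z' - ξ x z) := by
        intro z hzT z' hz'T hlt
        have h1 : v (ξ x z) = z := hξz x hx z hzT.1 hzT.2
        have h2 : v (ξ x z') = z' := hξz x hx z' hz'T.1 hz'T.2
        have hle : ξ x z ≤ ξ x z' := hmono hlt.le
        have hstrict : ξ x z < ξ x z' := by
          rcases lt_or_eq_of_le hle with h | h
          · exact h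
          · exfalso; rw [h, h2] at h1; exact hlt.ne h1.symm
        have hup : ξ x z' ≤ x := hξle x z' hx.1.le
        have hcont' : ContinuousOn v (Icc (ξ x z) (ξ x z')) :=
          hvc.mono (Icc_subset_Icc (hξge x z) (le_trans hup hx.2.le))
        have hIooab : Ioo (ξ x z) (ξ x z') ⊆ Ioo a b := fun c hc =>
          ⟨lt_of_le_of_lt (hξge x z) hc.1, lt_of_lt_of_le hc.2 (le_trans hup hx.2.le)⟩
        have hdiff : ∀ c ∈ Ioo (ξ x z) (ξ x z'), HasDerivAt v (deriv v c) c := by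
          intro c hc
          have hcab := hIooab hc
          have h3 := (hv.differentiableOn one_ne_zero) c (Ioo_subset_Icc_self hcab)
          exact (h3.differentiableAt (Icc_mem_nhds hcab.1 hcab.2)).hasDerivAt
        obtain ⟨c, hc, hc2⟩ := exists_hasDerivAt_eq_slope v (deriv v) hstrict hcont' hdiff
        have hM := hM3 c (hIooab hc)
        rw [h1, h2] at hc2
        have hpos : 0 < ξ x z' - ξ x z := sub_pos.2 hstrict
        have h4 : z' - z = deriv v c * (ξ x z' - ξ x z) := by
          field_simp at hc2
          linarith
        calc z' - z = deriv v c * (ξ x z' - ξ x z) := h4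
          _ ≤ |deriv v c| * (ξ x z' - ξ x z) :=
              mul_le_mul_of_nonneg_right (le_abs_self _) hpos.le
          _ ≤ M * (ξ x z' - ξ x z) := mul_le_mul_of_nonneg_right hM hpos.le
      intro z hzT z' hz'T
      rcases lt_trichotomy z z' with h | h | h
      · have h5 := key z hzT z' hz'T h
        have hle : ξ x z ≤ ξ x z' := hmono h.le
        rw [abs_sub_comm z z', abs_sub_comm (ξ x z) (ξ x z'),
          abs_of_nonneg (sub_nonneg.2 h.le), abs_of_nonneg (sub_nonneg.2 hle)]
        exact h5
      · rw [h]; simp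
      · have h5 := key z' hz'T z hzT h
        have hle : ξ x z' ≤ ξ x z := hmono h.le
        rw [abs_of_nonneg (sub_nonneg.2 h.le), abs_of_nonneg (sub_nonneg.2 hle)]
        exact h5
    have hunion : ∫⁻ z in T ∪ (Ioo (-H) (v x) \ T), Bq (ξ x z)
        = (∫⁻ z in T, Bq (ξ x z)) + ∫⁻ z in Ioo (-H) (v x) \ T, Bq (ξ x z) :=
      lintegral_union (measurableSet_Ioo.diff hTm) disjoint_sdiff_self_right
    calc ∫⁻ z in Ioo (-H) (v x), Bq (ξ x z)
        = ∫⁻ z in T ∪ (Ioo (-H) (v x) \ T), Bq (ξ x z) := by rw [← hsplit]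
      _ = (∫⁻ z in T, Bq (ξ x z)) + ∫⁻ z in Ioo (-H) (v x) \ T, Bq (ξ x z) := hunion
      _ = ∫⁻ z in T, Bq (ξ x z) := by rw [hzero, add_zero]
      _ ≤ ENNReal.ofReal M * ∫⁻ s, Bq s :=
          lintegral_comp_le hM0 hTm hφm hexp hBqm
  -- Fubini identities and assembly, all in ℝ≥0∞
  have hprod : (volume : Measure (ℝ × ℝ)) = (volume : Measure ℝ).prod volume :=
    Measure.volume_eq_prod ℝ ℝ
  set IW : ℝ≥0∞ := ∫⁻ p, F p with hIWdef
  set IG : ℝ≥0∞ := ∫⁻ p, G p with hIGdef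
  set IN : ℝ≥0∞ := ∫⁻ p in D, ENNReal.ofReal (Real.sqrt ((Gx p)^2 + (Gz p)^2)) with hINdef
  have hIWB : IW = ∫⁻ s, Bq s := by
    rw [hIWdef, hprod, lintegral_prod _ hFm.aemeasurable]
  have hIGA : IG = ∫⁻ t, Aq t := by
    rw [hIGdef, hprod, lintegral_prod_symm _ hGm.aemeasurable]
  set C : ℝ≥0∞ := ENNReal.ofReal M * (∫⁻ s, Bq s) + IG with hCdef
  have hslice : ∀ x ∈ Ioo a b, (∫⁻ z, Q (x, z)) ≤ Bq x * C := by
    intro x hx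
    have hmeas1 : Measurable (fun z => Bq (ξ x z) + Aq z) :=
      (hBqm.comp (hξmono x).measurable).add hAqm
    calc (∫⁻ z, Q (x, z)) = ∫⁻ z in Ioo (-H) (v x), Q (x, z) := by
          rw [← lintegral_indicator measurableSet_Ioo]
          congr 1
          funext z
          by_cases hzz : z ∈ Ioo (-H) (v x)
          · rw [Set.indicator_of_mem hzz]
          · rw [Set.indicator_of_notMem hzz]
            exact hQnot _ (fun hc => hzz ⟨hc.2.1, hc.2.2⟩)
      _ ≤ ∫⁻ z in Ioo (-H) (v x), Bq x * (Bq (ξ x z) + Aq z) := by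
          apply setLIntegral_mono (measurable_const.mul hmeas1)
          intro z hzz
          rw [hQmem (x, z) ⟨hx, hzz.1, hzz.2⟩, sq, ← abs_mul_abs_self,
            ENNReal.ofReal_mul (abs_nonneg _)]
          exact mul_le_mul' (KL1 x hx z ⟨hzz.1, hzz.2.le⟩) (KL2 x hx z hzz)
      _ = Bq x * ∫⁻ z in Ioo (-H) (v x), (Bq (ξ x z) + Aq z) := lintegral_const_mul _ hmeas1
      _ = Bq x * ((∫⁻ z in Ioo (-H) (v x), Bq (ξ x z)) + ∫⁻ z in Ioo (-H) (v x), Aq z) := by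
          rw [lintegral_add_left (f := fun z => Bq (ξ x z)) (hBqm.comp (hξmono x).measurable)]
      _ ≤ Bq x * C := by
          rw [hCdef]
          apply mul_le_mul' le_rfl
          apply add_le_add (hSUB x hx)
          calc ∫⁻ z in Ioo (-H) (v x), Aq z ≤ ∫⁻ z, Aq z :=
                lintegral_mono' Measure.restrict_le_self le_rfl
            _ = IG := hIGA.symm
  have hIQle : (∫⁻ p, Q p) ≤ (∫⁻ s, Bq s) * C := by
    rw [hprod, lintegral_prod _ hQm.aemeasurable]
    calc (∫⁻ x, ∫⁻ z, Q (x, z)) ≤ ∫⁻ x, (Ioo a b).indicator (fun x => Bq x * C) x := by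
          apply lintegral_mono
          intro x
          by_cases hx : x ∈ Ioo a b
          · rw [Set.indicator_of_mem hx]; exact hslice x hx
          · rw [Set.indicator_of_notMem hx]
            have h0 : ∀ z : ℝ, Q (x, z) = 0 := fun z => hQnot _ (fun hc => hx hc.1)
            exact le_of_eq (by simp only [h0, lintegral_zero])
      _ = ∫⁻ x in Ioo a b, Bq x * C := lintegral_indicator measurableSet_Ioo _
      _ = (∫⁻ x in Ioo a b, Bq x) * C := lintegral_mul_const _ hBqm
      _ ≤ (∫⁻ s, Bq s) * C := mul_le_mul' (lintegral_mono' Measure.restrict_le_self le_rfl) le_rfl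
  have hWN : IW ≤ IN := by
    rw [hIWdef, hINdef, ← lintegral_indicator hDmeas]
    apply lintegral_mono
    intro p
    by_cases hp : p ∈ D
    · rw [hFmem p hp, Set.indicator_of_mem hp]
      apply ENNReal.ofReal_le_ofReal
      rw [← Real.sqrt_sq_eq_abs]
      exact Real.sqrt_le_sqrt (by nlinarith [sq_nonneg (Gx p)])
    · rw [hFnot p hp, Set.indicator_of_notMem hp]
  have hGN : IG ≤ IN := by
    rw [hIGdef, hINdef, ← lintegral_indicator hDmeas]
    apply lintegral_mono
    intro p
    by_cases hp : p ∈ D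
    · rw [hGmem p hp, Set.indicator_of_mem hp]
      apply ENNReal.ofReal_le_ofReal
      rw [← Real.sqrt_sq_eq_abs]
      exact Real.sqrt_le_sqrt (by nlinarith [sq_nonneg (Gz p)])
    · rw [hGnot p hp, Set.indicator_of_notMem hp]
  have hINfin : IN ≠ ⊤ := by
    have hb : IN ≤ ENNReal.ofReal (Real.sqrt (K^2 + K^2)) * volume D := by
      rw [hINdef]
      calc ∫⁻ p in D, ENNReal.ofReal (Real.sqrt ((Gx p)^2 + (Gz p)^2))
          ≤ ∫⁻ _ in D, ENNReal.ofReal (Real.sqrt (K^2 + K^2)) := by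
            apply setLIntegral_mono' hDmeas
            intro p hp
            apply ENNReal.ofReal_le_ofReal
            apply Real.sqrt_le_sqrt
            have e1 : (Gx p)^2 ≤ K^2 := by
              rw [← sq_abs]; exact pow_le_pow_left₀ (abs_nonneg _) (hGxK p hp) 2
            have e2 : (Gz p)^2 ≤ K^2 := by
              rw [← sq_abs]; exact pow_le_pow_left₀ (abs_nonneg _) (hGzK p hp) 2
            linarith
        _ = ENNReal.ofReal (Real.sqrt (K^2 + K^2)) * volume D := by
            rw [setLIntegral_const]
    exact ne_top_of_le_ne_top (ENNReal.mul_ne_top ENNReal.ofReal_ne_top hDvol.ne) hb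
  have hIWfin : IW ≠ ⊤ := ne_top_of_le_ne_top hINfin hWN
  -- conversion to Bochner integrals
  have hQconv : ∫ p in D, (P p)^2 = (∫⁻ p, Q p).toReal := by
    rw [integral_eq_lintegral_of_nonneg_ae
      (Filter.Eventually.of_forall (fun p => sq_nonneg (P p)))
      (((hPc.mono subset_closure).pow 2).aestronglyMeasurable hDmeas)]
    have h1 : ∫⁻ p, Q p = ∫⁻ p in D, ENNReal.ofReal ((P p)^2) := by
      simp only [hQdef]
      exact lintegral_indicator hDmeas _
    rw [h1]
  have hNconv : (∫ p in D, Real.sqrt ((deriv (fun t => P (t, p.2)) p.1)^2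
      + (deriv (fun z => P (p.1, z)) p.2)^2)) = IN.toReal := by
    have hcongr : ∀ p ∈ D, Real.sqrt ((deriv (fun t => P (t, p.2)) p.1)^2
        + (deriv (fun z => P (p.1, z)) p.2)^2) = Real.sqrt ((Gx p)^2 + (Gz p)^2) := by
      intro p hp
      rw [hx_eq p hp, hw_eq p hp]
    have hcont : ContinuousOn (fun p => Real.sqrt ((Gx p)^2 + (Gz p)^2)) D :=
      Real.continuous_sqrt.comp_continuousOn ((hGxc.pow 2).add (hGzc.pow 2))
    have haesm : AEStronglyMeasurable (fun p => Real.sqrt ((deriv (fun t => P (t, p.2)) p.1)^2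
        + (deriv (fun z => P (p.1, z)) p.2)^2)) (volume.restrict D) :=
      (hcont.congr hcongr).aestronglyMeasurable hDmeas
    rw [integral_eq_lintegral_of_nonneg_ae
      (Filter.Eventually.of_forall (fun p => Real.sqrt_nonneg _)) haesm]
    congr 1
    rw [hINdef]
    apply setLIntegral_congr_fun hDmeas
    exact fun p hp => by rw [hcongr p hp]
  have hWconv : (∫ p in D, |deriv (fun z => P (p.1, z)) p.2|) = IW.toReal := by
    have hcongr : ∀ p ∈ D, |deriv (fun z => P (p.1, z)) p.2| = |Gz p| := by
      intro p hp
      rw [hw_eq p hp]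
    have haesm : AEStronglyMeasurable (fun p => |deriv (fun z => P (p.1, z)) p.2|)
        (volume.restrict D) := ((hGzc.abs).congr hcongr).aestronglyMeasurable hDmeas
    rw [integral_eq_lintegral_of_nonneg_ae
      (Filter.Eventually.of_forall (fun p => abs_nonneg _)) haesm]
    have h1 : IW = ∫⁻ p in D, ENNReal.ofReal |deriv (fun z => P (p.1, z)) p.2| := by
      rw [hIWdef]
      simp only [hFdef]
      rw [lintegral_indicator hDmeas]
      apply setLIntegral_congr_fun hDmeas
      exact fun p hp => by rw [hcongr p hp]
    rw [h1]
  have hfinal : (∫⁻ p, Q p) ≤ ENNReal.ofReal (2*M) * IN * IW := by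
    calc (∫⁻ p, Q p) ≤ (∫⁻ s, Bq s) * C := hIQle
      _ = IW * C := by rw [hIWB]
      _ ≤ IW * (ENNReal.ofReal M * IN + ENNReal.ofReal M * IN) := by
          apply mul_le_mul' le_rfl
          rw [hCdef]
          apply add_le_add
          · exact mul_le_mul' le_rfl (le_trans (le_of_eq hIWB.symm) hWN)
          · calc IG ≤ IN := hGN
              _ = 1 * IN := (one_mul _).symm
              _ ≤ ENNReal.ofReal M * IN := by
                  apply mul_le_mul' _ le_rfl
                  rw [← ENNReal.ofReal_one]
                  exact ENNReal.ofReal_le_ofReal hM1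
      _ = ENNReal.ofReal (2*M) * IN * IW := by
          rw [← two_mul, ENNReal.ofReal_mul (by norm_num : (0:ℝ) ≤ 2)]
          rw [show ENNReal.ofReal (2:ℝ) = 2 by norm_num]
          ring
  have hRfin : ENNReal.ofReal (2*M) * IN * IW ≠ ⊤ :=
    ENNReal.mul_ne_top (ENNReal.mul_ne_top ENNReal.ofReal_ne_top hINfin) hIWfin
  have hmain := ENNReal.toReal_mono hRfin hfinal
  rw [ENNReal.toReal_mul, ENNReal.toReal_mul,
    ENNReal.toReal_ofReal (by positivity : (0:ℝ) ≤ 2*M)] at hmain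
  rw [hQconv, hNconv, hWconv]
  linarith
end

section
/- Let β > 0, c ≥ 0, and g > 0 be constants, and let P ∈ C⁴([0,1]) satisfy β P''''(y) − c P''(y) = g for all y ∈ (0,1) together with the clamped boundary conditions P(0) = P'(0) = P(1) = P'(1) = 0. Then |P(y)| ≤ g/β for all y ∈ [0,1]. -/
open Set
open MeasureTheory

set_option maxHeartbeats 1000000

/-- Uniform bound for the clamped beam equation on `[0,1]`: if
`β P'''' - c P'' = g` on `(0,1)` with `P(0) = P'(0) = P(1) = P'(1) = 0`, then
`|P| ≤ g/β` on `[0,1]`. -/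
theorem stmt_12 (β c g : ℝ) (hβ : 0 < β) (hc : 0 ≤ c) (hg : 0 < g)
    (P P1 P2 P3 P4 : ℝ → ℝ)
    (h1 : ∀ y ∈ Icc (0:ℝ) 1, HasDerivAt P (P1 y) y)
    (h2 : ∀ y ∈ Icc (0:ℝ) 1, HasDerivAt P1 (P2 y) y)
    (h3 : ∀ y ∈ Icc (0:ℝ) 1, HasDerivAt P2 (P3 y) y)
    (h4 : ∀ y ∈ Icc (0:ℝ) 1, HasDerivAt P3 (P4 y) y)
    (hP4 : ContinuousOn P4 (Icc (0:ℝ) 1))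
    (hode : ∀ y ∈ Ioo (0:ℝ) 1, β * P4 y - c * P2 y = g)
    (hP0 : P 0 = 0) (hP10 : P1 0 = 0) (hP1 : P 1 = 0) (hP11 : P1 1 = 0) :
    ∀ y ∈ Icc (0:ℝ) 1, |P y| ≤ g / β := by
  have huIcc : Set.uIcc (0:ℝ) 1 = Icc 0 1 := uIcc_of_le zero_le_one
  have hcP : ContinuousOn P (Icc 0 1) := fun y hy => (h1 y hy).continuousAt.continuousWithinAt
  have hcP1 : ContinuousOn P1 (Icc 0 1) := fun y hy => (h2 y hy).continuousAt.continuousWithinAt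
  have hcP2 : ContinuousOn P2 (Icc 0 1) := fun y hy => (h3 y hy).continuousAt.continuousWithinAt
  have hcP3 : ContinuousOn P3 (Icc 0 1) := fun y hy => (h4 y hy).continuousAt.continuousWithinAt
  have hInt : ∀ {f : ℝ → ℝ}, ContinuousOn f (Icc 0 1) → IntervalIntegrable f volume 0 1 := by
    intro f hf
    apply ContinuousOn.intervalIntegrable
    rwa [huIcc]
  -- integration by parts:
  have ibp1 : ∫ x in (0:ℝ)..1, P x * P4 x
      = P 1 * P3 1 - P 0 * P3 0 - ∫ x in (0:ℝ)..1, P1 x * P3 x :=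
    intervalIntegral.integral_mul_deriv_eq_deriv_mul
      (fun x hx => h1 x (huIcc ▸ hx)) (fun x hx => h4 x (huIcc ▸ hx))
      (hInt hcP1) (hInt hP4)
  have ibp2 : ∫ x in (0:ℝ)..1, P1 x * P3 x
      = P1 1 * P2 1 - P1 0 * P2 0 - ∫ x in (0:ℝ)..1, P2 x * P2 x :=
    intervalIntegral.integral_mul_deriv_eq_deriv_mul
      (fun x hx => h2 x (huIcc ▸ hx)) (fun x hx => h3 x (huIcc ▸ hx))
      (hInt hcP2) (hInt hcP3)
  have ibp3 : ∫ x in (0:ℝ)..1, P x * P2 x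
      = P 1 * P1 1 - P 0 * P1 0 - ∫ x in (0:ℝ)..1, P1 x * P1 x :=
    intervalIntegral.integral_mul_deriv_eq_deriv_mul
      (fun x hx => h1 x (huIcc ▸ hx)) (fun x hx => h2 x (huIcc ▸ hx))
      (hInt hcP1) (hInt hcP2)
  set I1 : ℝ := ∫ x in (0:ℝ)..1, P1 x * P1 x with hI1
  set I2 : ℝ := ∫ x in (0:ℝ)..1, P2 x * P2 x with hI2
  have e1 : ∫ x in (0:ℝ)..1, P x * P4 x = I2 := by
    rw [ibp1, ibp2]; simp [hP0, hP1, hP10, hP11]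
  have e2 : ∫ x in (0:ℝ)..1, P x * P2 x = -I1 := by
    rw [ibp3]; simp [hP0, hP1, hP10, hP11]
  -- energy identity
  have hae : ∫ x in (0:ℝ)..1, (β * P4 x - c * P2 x) * P x = ∫ x in (0:ℝ)..1, g * P x := by
    apply intervalIntegral.integral_congr_ae
    have hne : ∀ᵐ x : ℝ, x ≠ 1 := by
      rw [MeasureTheory.ae_iff]; simpa using MeasureTheory.measure_singleton (1:ℝ)
    filter_upwards [hne] with x hx hmem
    rw [uIoc_of_le (zero_le_one)] at hmem
    have : x ∈ Ioo (0:ℝ) 1 := ⟨hmem.1, lt_of_le_of_ne hmem.2 hx⟩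
    rw [hode x this]
  have hsplit : ∫ x in (0:ℝ)..1, (β * P4 x - c * P2 x) * P x
      = β * (∫ x in (0:ℝ)..1, P x * P4 x) - c * (∫ x in (0:ℝ)..1, P x * P2 x) := by
    have step1 : ∫ x in (0:ℝ)..1, (β * P4 x - c * P2 x) * P x
        = ∫ x in (0:ℝ)..1, (β * (P x * P4 x) - c * (P x * P2 x)) :=
      intervalIntegral.integral_congr (fun x _ => by ring)
    rw [step1, intervalIntegral.integral_sub (f := fun x => β * (P x * P4 x)) (g := fun x => c * (P x * P2 x)) ((hInt (hcP.mul hP4)).const_mul β)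
      ((hInt (hcP.mul hcP2)).const_mul c), intervalIntegral.integral_const_mul,
      intervalIntegral.integral_const_mul]
  have energy : β * I2 + c * I1 = g * ∫ x in (0:ℝ)..1, P x := by
    have := hae
    rw [hsplit, e1, e2, intervalIntegral.integral_const_mul] at this
    linarith
  have hI1nn : 0 ≤ I1 :=
    intervalIntegral.integral_nonneg zero_le_one (fun u _ => mul_self_nonneg _)
  have hI2nn : 0 ≤ I2 :=
    intervalIntegral.integral_nonneg zero_le_one (fun u _ => mul_self_nonneg _)
  set A : ℝ := ∫ x in (0:ℝ)..1, |P2 x| with hA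
  have hAnn : 0 ≤ A :=
    intervalIntegral.integral_nonneg zero_le_one (fun u _ => abs_nonneg _)
  -- pointwise: |P1 y| ≤ A on [0,1]
  have hP1bd : ∀ y ∈ Icc (0:ℝ) 1, |P1 y| ≤ A := by
    intro y hy
    have hftc : ∫ t in (0:ℝ)..y, P2 t = P1 y - P1 0 := by
      apply intervalIntegral.integral_eq_sub_of_hasDerivAt
      · intro x hx
        apply h2
        rw [uIcc_of_le hy.1] at hx
        exact ⟨hx.1, hx.2.trans hy.2⟩
      · exact (hInt hcP2).mono_set (by rw [huIcc, uIcc_of_le hy.1]; exact Icc_subset_Icc le_rfl hy.2)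
    rw [show P1 y = ∫ t in (0:ℝ)..y, P2 t by rw [hftc, hP10]; ring]
    calc |∫ t in (0:ℝ)..y, P2 t| ≤ ∫ t in (0:ℝ)..y, |P2 t| :=
          intervalIntegral.abs_integral_le_integral_abs hy.1
      _ ≤ A := by
          apply intervalIntegral.integral_mono_interval le_rfl hy.1 hy.2
          · exact Filter.Eventually.of_forall fun x => abs_nonneg _
          · exact hInt hcP2.abs
  -- pointwise: |P y| ≤ A on [0,1]
  have hPbd : ∀ y ∈ Icc (0:ℝ) 1, |P y| ≤ A := by
    intro y hy
    have hftc : ∫ t in (0:ℝ)..y, P1 t = P y - P 0 := by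
      apply intervalIntegral.integral_eq_sub_of_hasDerivAt
      · intro x hx
        apply h1
        rw [uIcc_of_le hy.1] at hx
        exact ⟨hx.1, hx.2.trans hy.2⟩
      · exact (hInt hcP1).mono_set (by rw [huIcc, uIcc_of_le hy.1]; exact Icc_subset_Icc le_rfl hy.2)
    have hsub : IntervalIntegrable P1 volume 0 y :=
      (hInt hcP1).mono_set (by rw [huIcc, uIcc_of_le hy.1]; exact Icc_subset_Icc le_rfl hy.2)
    rw [show P y = ∫ t in (0:ℝ)..y, P1 t by rw [hftc, hP0]; ring]
    calc |∫ t in (0:ℝ)..y, P1 t| ≤ ∫ t in (0:ℝ)..y, |P1 t| :=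
          intervalIntegral.abs_integral_le_integral_abs hy.1
      _ ≤ ∫ _t in (0:ℝ)..y, A := by
          apply intervalIntegral.integral_mono_on hy.1 hsub.abs intervalIntegrable_const
          intro x hx
          exact hP1bd x ⟨hx.1, hx.2.trans hy.2⟩
      _ = y * A := by simp
      _ ≤ A := by nlinarith [hy.2]
  -- ∫ P ≤ A
  have hintP : ∫ x in (0:ℝ)..1, P x ≤ A := by
    calc ∫ x in (0:ℝ)..1, P x ≤ ∫ _x in (0:ℝ)..1, A := by
          apply intervalIntegral.integral_mono_on zero_le_one (hInt hcP) intervalIntegrable_const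
          intro x hx
          exact (le_abs_self _).trans (hPbd x hx)
      _ = A := by simp
  -- Cauchy–Schwarz: A^2 ≤ I2
  have hCS : A * A ≤ I2 := by
    have h0 : 0 ≤ ∫ x in (0:ℝ)..1, (|P2 x| - A) * (|P2 x| - A) :=
      intervalIntegral.integral_nonneg zero_le_one (fun u _ => mul_self_nonneg _)
    have hexp : ∫ x in (0:ℝ)..1, (|P2 x| - A) * (|P2 x| - A)
        = I2 - 2 * A * A + A * A := by
      have : ∀ x, (|P2 x| - A) * (|P2 x| - A)
          = P2 x * P2 x - (2 * A) * |P2 x| + A * A := by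
        intro x
        have := abs_mul_abs_self (P2 x)
        nlinarith []
      rw [intervalIntegral.integral_congr (g := fun x => P2 x * P2 x - (2 * A) * |P2 x| + A * A)
        (fun x _ => this x)]
      rw [intervalIntegral.integral_add, intervalIntegral.integral_sub,
        intervalIntegral.integral_const_mul]
      · simp [hA]
        try ring
      · exact hInt (hcP2.mul hcP2)
      · exact (hInt hcP2.abs).const_mul _
      · exact (hInt (hcP2.mul hcP2)).sub ((hInt hcP2.abs).const_mul _)
      · exact intervalIntegrable_const
    rw [hexp] at h0
    linarith
  -- conclude
  have key : β * (A * A) ≤ g * A := by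
    have h1' : β * I2 ≤ g * A := by nlinarith [energy, hintP]
    nlinarith
  have hAle : A ≤ g / β := by
    rcases eq_or_lt_of_le hAnn with h | h
    · rw [← h]; positivity
    · rw [le_div_iff₀ hβ]; nlinarith
  intro y hy
  exact (hPbd y hy).trans hAle
end

section
/- Let L > 0, H > 0, K > 0, set D := (-L,L), and let σ : [-L,L] → ℝ be continuous with 0 < σ(x) ≤ σ̄ for all x. Let h : [-L,L] × [-H,∞) × [-H,∞) → ℝ be continuously differentiable with |∂_x h(x,z,w)| + |∂_z h(x,z,w)| ≤ K √((1+w²)/(H+w)) and |∂_w h(x,z,w)| ≤ K/√(H+w) for all (x,z,w) with w > -H, and with |h(x,-H,w)| ≤ K; let 𝔥 : [-L,L] × [-H,∞) → ℝ be continuous with |𝔥(x,w)| ≤ K. Then for every u ∈ C¹([-L,L]) with u ≥ -H on [-L,L] and u(-L) = u(L) = 0: (1/2) ∫_{Ω(u)} (|∂_x h(x,z,u(x)) + ∂_w h(x,z,u(x)) u'(x)|² + |∂_z h(x,z,u(x))|²) d(x,z) + (1/2) ∫_D σ(x) (h(x,-H,u(x)) − 𝔥(x,u(x)))² dx ≤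 2(1+σ̄)·(2L)·K² + 2K² ‖u‖²_{L²(D)} + K² ‖u'‖²_{L²(D)}. -/
open MeasureTheory Set

/-- The region between the bottom plate at height `-H` and the graph of `u` over
`D = (-L,L)`. -/
def Omega (L H : ℝ) (u : ℝ → ℝ) : Set (ℝ × ℝ) :=
  {p : ℝ × ℝ | p.1 ∈ Set.Ioo (-L) L ∧ -H < p.2 ∧ p.2 < u p.1}

set_option maxHeartbeats 1000000 in
/-- Coercivity estimate (key step in Lemma 6.1 of the paper): under the growth
assumptions (2.5) on the boundary data `(h, 𝔥)`, the Dirichlet-type quantity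
`(1/2)∫_{Ω(u)} |∇ h_u|² + (1/2)∫_D σ (h_u(·,-H) - 𝔥_u)² dx` is bounded by
`2(1+σbar)(2L)K² + 2K²‖u‖²_{L²(D)} + K²‖u'‖²_{L²(D)}`. -/
theorem stmt_15 (L H K σbar : ℝ) (hL : 0 < L) (hH : 0 < H) (hK : 0 < K)
    (σ : ℝ → ℝ) (hσc : ContinuousOn σ (Icc (-L) L))
    (hσ : ∀ x ∈ Icc (-L) L, 0 < σ x ∧ σ x ≤ σbar)
    (h : ℝ → ℝ → ℝ → ℝ) (𝔥 : ℝ → ℝ → ℝ)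
    (hreg : ContDiffOn ℝ 1 (fun p : ℝ × ℝ × ℝ => h p.1 p.2.1 p.2.2)
      (Icc (-L) L ×ˢ Ici (-H) ×ˢ Ici (-H)))
    (h𝔥reg : ContinuousOn (fun p : ℝ × ℝ => 𝔥 p.1 p.2) (Icc (-L) L ×ˢ Ici (-H)))
    (hgrow1 : ∀ x ∈ Icc (-L) L, ∀ z ∈ Ici (-H), ∀ w, -H < w →
      |derivWithin (fun t => h t z w) (Icc (-L) L) x|
        + |derivWithin (fun s => h x s w) (Ici (-H)) z|
        ≤ K * Real.sqrt ((1 + w ^ 2) / (H + w)))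
    (hgrow2 : ∀ x ∈ Icc (-L) L, ∀ z ∈ Ici (-H), ∀ w, -H < w →
      |derivWithin (fun s => h x z s) (Ici (-H)) w| ≤ K / Real.sqrt (H + w))
    (hbd1 : ∀ x ∈ Icc (-L) L, ∀ w ∈ Ici (-H), |h x (-H) w| ≤ K)
    (hbd2 : ∀ x ∈ Icc (-L) L, ∀ w ∈ Ici (-H), |𝔥 x w| ≤ K)
    (u : ℝ → ℝ) (hu : ContDiffOn ℝ 1 u (Icc (-L) L))
    (huH : ∀ x ∈ Icc (-L) L, -H ≤ u x) (hua : u (-L) = 0) (hub : u L = 0) :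
    (1 / 2) * (∫ p in Omega L H u,
        ((derivWithin (fun t => h t p.2 (u p.1)) (Icc (-L) L) p.1
            + derivWithin (fun s => h p.1 p.2 s) (Ici (-H)) (u p.1)
                * derivWithin u (Icc (-L) L) p.1) ^ 2
          + (derivWithin (fun s => h p.1 s (u p.1)) (Ici (-H)) p.2) ^ 2))
      + (1 / 2) * (∫ x in Ioo (-L) L, σ x * (h x (-H) (u x) - 𝔥 x (u x)) ^ 2)
    ≤ 2 * (1 + σbar) * (2 * L) * K ^ 2
        + 2 * K ^ 2 * (∫ x in Ioo (-L) L, (u x) ^ 2)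
        + K ^ 2 * ∫ x in Ioo (-L) L, (derivWithin u (Icc (-L) L) x) ^ 2 := by
  have hLL : (-L : ℝ) < L := by linarith
  have hucont : ContinuousOn u (Icc (-L) L) := hu.continuousOn
  have hdcont : ContinuousOn (fun x => derivWithin u (Icc (-L) L) x) (Icc (-L) L) :=
    hu.continuousOn_derivWithin (uniqueDiffOn_Icc hLL) le_rfl
  set c : ℝ → ℝ := fun x =>
    2 * K ^ 2 + 2 * K ^ 2 * u x ^ 2 + 2 * K ^ 2 * (derivWithin u (Icc (-L) L) x) ^ 2 with hcdef
  set g : ℝ × ℝ → ℝ := fun p => c p.1 / (H + u p.1) with hgdef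
  have hcnn : ∀ x, 0 ≤ c x := fun x => by simp only [hcdef]; positivity
  have hccont : ContinuousOn c (Icc (-L) L) := by
    simp only [hcdef]
    exact (continuousOn_const.add (continuousOn_const.mul (hucont.pow 2))).add
      (continuousOn_const.mul (hdcont.pow 2))
  -- Omega is open, hence measurable
  have hΩopen : IsOpen (Omega L H u) := by
    have hV : IsOpen ((Ioo (-L : ℝ) L) ×ˢ (univ : Set ℝ)) := isOpen_Ioo.prod isOpen_univ
    have hmaps : ∀ p : ℝ × ℝ, p ∈ (Ioo (-L : ℝ) L) ×ˢ (univ : Set ℝ) → p.1 ∈ Icc (-L) L :=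
      fun p hp => Ioo_subset_Icc_self hp.1
    have hf : ContinuousOn (fun p : ℝ × ℝ => u p.1 - p.2) ((Ioo (-L : ℝ) L) ×ˢ univ) :=
      (hucont.comp continuous_fst.continuousOn hmaps).sub continuous_snd.continuousOn
    have h1 : IsOpen (((Ioo (-L : ℝ) L) ×ˢ (univ : Set ℝ)) ∩
        (fun p : ℝ × ℝ => u p.1 - p.2) ⁻¹' Ioi 0) :=
      hf.isOpen_inter_preimage hV isOpen_Ioi
    have heq : Omega L H u = (((Ioo (-L : ℝ) L) ×ˢ (univ : Set ℝ)) ∩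
        (fun p : ℝ × ℝ => u p.1 - p.2) ⁻¹' Ioi 0) ∩ {p : ℝ × ℝ | -H < p.2} := by
      ext p
      simp only [Omega, mem_setOf_eq, mem_inter_iff, mem_prod, mem_univ, and_true,
        mem_preimage, mem_Ioi, sub_pos]
      tauto
    rw [heq]
    exact h1.inter (isOpen_lt continuous_const continuous_snd)
  have hΩm : MeasurableSet (Omega L H u) := hΩopen.measurableSet
  -- g is continuous on Omega
  have hΩpos : ∀ p ∈ Omega L H u, 0 < H + u p.1 := by
    intro p hp
    have : -H < u p.1 := lt_trans hp.2.1 hp.2.2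
    linarith
  have hΩsub : ∀ p : ℝ × ℝ, p ∈ Omega L H u → p.1 ∈ Icc (-L) L :=
    fun p hp => Ioo_subset_Icc_self hp.1
  have hgcont : ContinuousOn g (Omega L H u) := by
    apply ContinuousOn.div
    · exact hccont.comp continuous_fst.continuousOn hΩsub
    · exact continuousOn_const.add (hucont.comp continuous_fst.continuousOn hΩsub)
    · exact fun p hp => ne_of_gt (hΩpos p hp)
  have hgnn : ∀ p ∈ Omega L H u, 0 ≤ g p := by
    intro p hp
    exact div_nonneg (hcnn p.1) (hΩpos p hp).le
  -- integrability of c on D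
  have hcint : IntegrableOn c (Ioo (-L) L) :=
    (hccont.integrableOn_Icc).mono_set Ioo_subset_Icc_self
  have hfin : ∫⁻ x in Ioo (-L) L, ENNReal.ofReal (c x) < ⊤ := hcint.lintegral_lt_top
  -- Tonelli: lintegral of g over Omega is at most lintegral of c over D
  have hkey : ∫⁻ p in Omega L H u, ENNReal.ofReal (g p)
      ≤ ∫⁻ x in Ioo (-L) L, ENNReal.ofReal (c x) := by
    rw [← lintegral_indicator hΩm, ← lintegral_indicator measurableSet_Ioo]
    have hmeas : AEMeasurable ((Omega L H u).indicator (fun p => ENNReal.ofReal (g p)))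
        ((volume : Measure ℝ).prod volume) := by
      rw [← Measure.volume_eq_prod, aemeasurable_indicator_iff hΩm]
      exact ((hgcont.aemeasurable hΩm)).ennreal_ofReal
    rw [Measure.volume_eq_prod, lintegral_prod _ hmeas]
    apply lintegral_mono
    intro x
    beta_reduce
    by_cases hx : x ∈ Ioo (-L) L
    · have hxI : x ∈ Icc (-L) L := Ioo_subset_Icc_self hx
      have hslice : (fun z => (Omega L H u).indicator (fun p => ENNReal.ofReal (g p)) (x, z))
          = (Ioo (-H) (u x)).indicator
              (fun _ => ENNReal.ofReal (c x / (H + u x))) := by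
        funext z
        by_cases hz : z ∈ Ioo (-H) (u x)
        · rw [indicator_of_mem hz, indicator_of_mem (show (x, z) ∈ Omega L H u from
            ⟨hx, hz.1, hz.2⟩)]
        · rw [indicator_of_notMem hz, indicator_of_notMem
            (fun hmem : (x, z) ∈ Omega L H u => hz ⟨hmem.2.1, hmem.2.2⟩)]
      rw [hslice, lintegral_indicator_const measurableSet_Ioo, Real.volume_Ioo,
        indicator_of_mem hx]
      rcases eq_or_lt_of_le (huH x hxI) with h0 | h0
      · rw [← h0]
        simp
      · have hpos : 0 < H + u x := by linarith
        rw [← ENNReal.ofReal_mul (div_nonneg (hcnn x) hpos.le)]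
        apply ENNReal.ofReal_le_ofReal
        rw [div_mul_eq_mul_div, show u x - -H = H + u x by ring,
          mul_div_assoc, div_self (ne_of_gt hpos), mul_one]
    · have hz0 : ∀ z : ℝ, (Omega L H u).indicator (fun p => ENNReal.ofReal (g p)) (x, z) = 0 :=
        fun z => indicator_of_notMem (fun hmem => hx hmem.1) _
      simp only [hz0, lintegral_zero]
      exact zero_le
  -- g is integrable on Omega
  have hgae : AEStronglyMeasurable g (volume.restrict (Omega L H u)) :=
    hgcont.aestronglyMeasurable hΩm
  have hgnn' : 0 ≤ᵐ[volume.restrict (Omega L H u)] g :=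
    ae_restrict_of_forall_mem hΩm hgnn
  have hgint : IntegrableOn g (Omega L H u) := by
    refine ⟨hgae, ?_⟩
    rw [hasFiniteIntegral_iff_ofReal hgnn']
    exact lt_of_le_of_lt hkey hfin
  -- convert to Bochner integrals
  have hcnn' : 0 ≤ᵐ[volume.restrict (Ioo (-L) L)] c := ae_of_all _ hcnn
  have hgval : ∫ p in Omega L H u, g p ≤ ∫ x in Ioo (-L) L, c x := by
    rw [integral_eq_lintegral_of_nonneg_ae hgnn' hgae,
      integral_eq_lintegral_of_nonneg_ae hcnn' (hcint.aestronglyMeasurable)]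
    exact ENNReal.toReal_mono hfin.ne hkey
  -- the pointwise bound on the Dirichlet integrand
  have hF1 : (∫ p in Omega L H u,
        ((derivWithin (fun t => h t p.2 (u p.1)) (Icc (-L) L) p.1
            + derivWithin (fun s => h p.1 p.2 s) (Ici (-H)) (u p.1)
                * derivWithin u (Icc (-L) L) p.1) ^ 2
          + (derivWithin (fun s => h p.1 s (u p.1)) (Ici (-H)) p.2) ^ 2))
      ≤ ∫ p in Omega L H u, g p := by
    refine integral_mono_of_nonneg (ae_of_all _ fun p => by positivity) hgint ?_
    refine ae_restrict_of_forall_mem hΩm ?_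
    intro p hp
    obtain ⟨hx, hz1, hz2⟩ := hp
    have hxI : p.1 ∈ Icc (-L) L := Ioo_subset_Icc_self hx
    have hzI : p.2 ∈ Ici (-H) := le_of_lt hz1
    have hw : -H < u p.1 := lt_trans hz1 hz2
    have hpos : 0 < H + u p.1 := by linarith
    set a := derivWithin (fun t => h t p.2 (u p.1)) (Icc (-L) L) p.1 with hadef
    set b := derivWithin (fun s => h p.1 p.2 s) (Ici (-H)) (u p.1) with hbdef
    set e := derivWithin (fun s => h p.1 s (u p.1)) (Ici (-H)) p.2 with hedef
    set du := derivWithin u (Icc (-L) L) p.1 with hdudef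
    have h1 := hgrow1 p.1 hxI p.2 hzI (u p.1) hw
    have h2 := hgrow2 p.1 hxI p.2 hzI (u p.1) hw
    have hq : (0:ℝ) ≤ (1 + u p.1 ^ 2) / (H + u p.1) := by positivity
    have ha2 : a ^ 2 + e ^ 2 ≤ K ^ 2 * ((1 + u p.1 ^ 2) / (H + u p.1)) := by
      have hsq : (|a| + |e|) ^ 2 ≤ (K * Real.sqrt ((1 + u p.1 ^ 2) / (H + u p.1))) ^ 2 :=
        pow_le_pow_left₀ (by positivity) h1 2
      have heq2 : (K * Real.sqrt ((1 + u p.1 ^ 2) / (H + u p.1))) ^ 2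
          = K ^ 2 * ((1 + u p.1 ^ 2) / (H + u p.1)) := by
        rw [mul_pow, Real.sq_sqrt hq]
      nlinarith [sq_abs a, sq_abs e, abs_nonneg a, abs_nonneg e, mul_nonneg (abs_nonneg a) (abs_nonneg e)]
    have hb2 : b ^ 2 ≤ K ^ 2 / (H + u p.1) := by
      have hsq : |b| ^ 2 ≤ (K / Real.sqrt (H + u p.1)) ^ 2 :=
        pow_le_pow_left₀ (abs_nonneg b) h2 2
      have heq2 : (K / Real.sqrt (H + u p.1)) ^ 2 = K ^ 2 / (H + u p.1) := by
        rw [div_pow, Real.sq_sqrt hpos.le]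
      rw [← sq_abs b]
      linarith [hsq, heq2.symm ▸ hsq]
    have hbd' : du ^ 2 * b ^ 2 ≤ du ^ 2 * (K ^ 2 / (H + u p.1)) :=
      mul_le_mul_of_nonneg_left hb2 (sq_nonneg du)
    have hexp : g p = 2 * (K ^ 2 * ((1 + u p.1 ^ 2) / (H + u p.1)))
        + 2 * (du ^ 2 * (K ^ 2 / (H + u p.1))) := by
      simp only [hgdef, hcdef, hdudef]
      field_simp
    rw [hexp]
    nlinarith [sq_nonneg (a - b * du), sq_nonneg e]
  -- compute the integral of c
  have hu2int : IntegrableOn (fun x => u x ^ 2) (Ioo (-L) L) :=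
    ((hucont.pow 2).integrableOn_Icc).mono_set Ioo_subset_Icc_self
  have hd2int : IntegrableOn (fun x => (derivWithin u (Icc (-L) L) x) ^ 2) (Ioo (-L) L) :=
    ((hdcont.pow 2).integrableOn_Icc).mono_set Ioo_subset_Icc_self
  have hvol : (volume (Ioo (-L : ℝ) L)).toReal = 2 * L := by
    rw [Real.volume_Ioo, ENNReal.toReal_ofReal (by linarith)]
    ring
  have hcval : ∫ x in Ioo (-L) L, c x
      = 2 * K ^ 2 * (2 * L) + 2 * K ^ 2 * (∫ x in Ioo (-L) L, u x ^ 2)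
        + 2 * K ^ 2 * (∫ x in Ioo (-L) L, (derivWithin u (Icc (-L) L) x) ^ 2) := by
    simp only [hcdef]
    have e1 : ∫ x in Ioo (-L) L,
        (2 * K ^ 2 + 2 * K ^ 2 * u x ^ 2 + 2 * K ^ 2 * (derivWithin u (Icc (-L) L) x) ^ 2)
        = (∫ x in Ioo (-L) L, (2 * K ^ 2 + 2 * K ^ 2 * u x ^ 2))
          + ∫ x in Ioo (-L) L, 2 * K ^ 2 * (derivWithin u (Icc (-L) L) x) ^ 2 :=
      integral_add ((integrableOn_const measure_Ioo_lt_top.ne).add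
        (hu2int.const_mul _)) (hd2int.const_mul _)
    have e2 : ∫ x in Ioo (-L) L, (2 * K ^ 2 + 2 * K ^ 2 * u x ^ 2)
        = (∫ _x in Ioo (-L) L, (2 * K ^ 2 : ℝ)) + ∫ x in Ioo (-L) L, 2 * K ^ 2 * u x ^ 2 :=
      integral_add (integrableOn_const measure_Ioo_lt_top.ne) (hu2int.const_mul _)
    have e3 : ∫ x in Ioo (-L) L, 2 * K ^ 2 * (derivWithin u (Icc (-L) L) x) ^ 2
        = 2 * K ^ 2 * ∫ x in Ioo (-L) L, (derivWithin u (Icc (-L) L) x) ^ 2 :=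
      integral_const_mul _ _
    have e4 : ∫ x in Ioo (-L) L, 2 * K ^ 2 * u x ^ 2
        = 2 * K ^ 2 * ∫ x in Ioo (-L) L, u x ^ 2 := integral_const_mul _ _
    rw [e1, e2, e3, e4, setIntegral_const, measureReal_def, hvol, smul_eq_mul]
    ring
  -- second integral
  have hI2 : ∫ x in Ioo (-L) L, σ x * (h x (-H) (u x) - 𝔥 x (u x)) ^ 2
      ≤ ∫ x in Ioo (-L) L, (σbar * (2 * K) ^ 2 : ℝ) := by
    refine integral_mono_of_nonneg ?_ (integrableOn_const measure_Ioo_lt_top.ne) ?_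
    · refine ae_restrict_of_forall_mem measurableSet_Ioo ?_
      intro x hx
      have hσx := hσ x (Ioo_subset_Icc_self hx)
      exact mul_nonneg hσx.1.le (sq_nonneg _)
    · refine ae_restrict_of_forall_mem measurableSet_Ioo ?_
      intro x hx
      have hxI : x ∈ Icc (-L) L := Ioo_subset_Icc_self hx
      have hσx := hσ x hxI
      have h1 := abs_le.1 (hbd1 x hxI (u x) (huH x hxI))
      have h2 := abs_le.1 (hbd2 x hxI (u x) (huH x hxI))
      have hsq : (h x (-H) (u x) - 𝔥 x (u x)) ^ 2 ≤ (2 * K) ^ 2 := by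
        nlinarith [h1.1, h1.2, h2.1, h2.2]
      exact mul_le_mul hσx.2 hsq (sq_nonneg _) (hσx.1.le.trans hσx.2)
  have hI2' : ∫ x in Ioo (-L) L, (σbar * (2 * K) ^ 2 : ℝ) = 2 * L * (σbar * (2 * K) ^ 2) := by
    rw [setIntegral_const, measureReal_def, hvol, smul_eq_mul]
  -- nonnegativity of the L² norms
  have hu2nn : 0 ≤ ∫ x in Ioo (-L) L, u x ^ 2 :=
    setIntegral_nonneg measurableSet_Ioo fun x _ => sq_nonneg _
  have hd2nn : 0 ≤ ∫ x in Ioo (-L) L, (derivWithin u (Icc (-L) L) x) ^ 2 :=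
    setIntegral_nonneg measurableSet_Ioo fun x _ => sq_nonneg _
  have hLK : 0 < L * K ^ 2 := mul_pos hL (pow_pos hK 2)
  have hKA : 0 ≤ K ^ 2 * ∫ x in Ioo (-L) L, u x ^ 2 :=
    mul_nonneg (pow_pos hK 2).le hu2nn
  have hI1 := (hF1.trans hgval).trans_eq hcval
  have hI2'' := hI2.trans_eq hI2'
  nlinarith [hI1, hI2'', hKA, hLK]
end
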